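/- Fix continuous ψ, c : [0, ∞) → ℝ. Then G[ψ, c] is continuous on [0, ∞), satisfies G[ψ, c] ≤ ψ, and has the property that for every t > 0 and every C¹ supertangent φ to G[ψ, c] at t (i.e. φ(t) = G[ψ, c](t) and G[ψ, c] − φ has a local maximum at t), one has φ'(t) ≤ c(t). Moreover G[ψ, c] is maximal with these properties: if f : [0, ∞) → ℝ is continuous, f ≤ ψ, and φ'(t) ≤ c(t) for every t > 0 and every C¹ supertangent φ to f at t, then f ≤ G[ψ, c] on [0, ∞). -/

import Mathlib

open Set Filter MeasureTheory intervalIntegral Topology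

/-- The operator `G[ψ, c](t) = min_{r ∈ [0, t]} ( ψ(r) + ∫_r^t c(τ) dτ )`. -/
noncomputable def Gop (ψ c : ℝ → ℝ) (t : ℝ) : ℝ :=
  sInf ((fun r => ψ r + ∫ τ in r..t, c τ) '' Icc 0 t)

namespace GopAux

/-- running minimum -/
noncomputable def rmin (g : ℝ → ℝ) (t : ℝ) : ℝ := sInf (g '' Icc 0 t)

variable {g : ℝ → ℝ}

lemma bddBelow_image (hg : Continuous g) (t : ℝ) : BddBelow (g '' Icc 0 t) :=
  (isCompact_Icc.image hg).bddBelow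

lemma rmin_le (hg : Continuous g) {t r : ℝ} (hr : r ∈ Icc 0 t) : rmin g t ≤ g r :=
  csInf_le (bddBelow_image hg t) (mem_image_of_mem _ hr)

lemma rmin_anti (hg : Continuous g) {s t : ℝ} (hs : 0 ≤ s) (hst : s ≤ t) :
    rmin g t ≤ rmin g s :=
  csInf_le_csInf (bddBelow_image hg t) ((nonempty_Icc.mpr hs).image _)
    (image_mono (Icc_subset_Icc_right hst))

lemma rmin_mem (hg : Continuous g) {t : ℝ} (ht : 0 ≤ t) : rmin g t ∈ g '' Icc 0 t :=
  (isCompact_Icc.image hg).sInf_mem ((nonempty_Icc.mpr ht).image _)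

lemma rmin_cont (hg : Continuous g) : ContinuousOn (rmin g) (Ici 0) := by
  intro t₀ ht₀
  rw [Metric.continuousWithinAt_iff]
  intro ε hε
  obtain ⟨δ, hδ, hδ'⟩ := Metric.continuousAt_iff.mp hg.continuousAt (ε / 2) (by linarith)
  refine ⟨δ, hδ, fun t ht hdist => ?_⟩
  have ht' : (0 : ℝ) ≤ t := ht
  rw [Real.dist_eq, abs_lt] at hdist
  rcases le_or_gt t₀ t with hle | hlt
  · have h1 : rmin g t ≤ rmin g t₀ := rmin_anti hg ht₀ hle
    obtain ⟨r, hr, hgr⟩ := rmin_mem hg ht'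
    rcases le_or_gt r t₀ with hr2 | hr2
    · have h2 : rmin g t₀ ≤ g r := rmin_le hg ⟨hr.1, hr2⟩
      rw [Real.dist_eq, abs_lt]
      constructor <;> linarith
    · have hd : dist r t₀ < δ := by
        rw [Real.dist_eq, abs_lt]; constructor <;> [linarith; linarith [hr.2]]
      have h3 := hδ' hd
      rw [Real.dist_eq, abs_lt] at h3
      have h2 : rmin g t₀ ≤ g t₀ := rmin_le hg ⟨ht₀, le_refl t₀⟩
      rw [Real.dist_eq, abs_lt]
      constructor <;> linarith
  · have h1 : rmin g t₀ ≤ rmin g t := rmin_anti hg ht' (le_of_lt hlt)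
    obtain ⟨r, hr, hgr⟩ := rmin_mem hg ht₀
    rcases le_or_gt r t with hr2 | hr2
    · have h2 : rmin g t ≤ g r := rmin_le hg ⟨hr.1, hr2⟩
      rw [Real.dist_eq, abs_lt]
      constructor <;> linarith
    · have hd : dist r t₀ < δ := by
        rw [Real.dist_eq, abs_lt]; constructor <;> [linarith [hr.2]; linarith [hr.2]]
      have h3 := hδ' hd
      have h4 := hδ' (show dist t t₀ < δ by rw [Real.dist_eq, abs_lt]; exact hdist)
      rw [Real.dist_eq, abs_lt] at h3 h4
      have h2 : rmin g t ≤ g t := rmin_le hg ⟨ht', le_refl t⟩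
      rw [Real.dist_eq, abs_lt]
      constructor <;> linarith

lemma hasDerivAt_posPartSq (t x : ℝ) :
    HasDerivAt (fun s => (max (s - t) 0) ^ 2) (2 * max (x - t) 0) x := by
  rcases lt_trichotomy x t with h | h | h
  · have heq : (fun s : ℝ => (max (s - t) 0) ^ 2) =ᶠ[𝓝 x] fun _ => (0 : ℝ) := by
      filter_upwards [Iio_mem_nhds h] with s hs
      rw [max_eq_right (by simp only [mem_Iio] at hs; linarith)]
      norm_num
    rw [max_eq_right (by linarith), mul_zero]
    exact (hasDerivAt_const x (0 : ℝ)).congr_of_eventuallyEq heq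
  · subst h
    rw [max_eq_right (by linarith), mul_zero]
    rw [hasDerivAt_iff_tendsto_slope]
    have hb : ∀ s : ℝ, ‖slope (fun s => (max (s - x) 0) ^ 2) x s‖ ≤ |s - x| := by
      intro s
      have hfx : (max (x - x) 0) ^ 2 = 0 := by norm_num
      rw [slope_def_field, hfx, sub_zero]
      rcases eq_or_ne s x with rfl | hs
      · simp
      · have h1 : (max (s - x) 0) ^ 2 ≤ (s - x) ^ 2 := by
          rcases le_or_gt (s - x) 0 with h' | h'
          · rw [max_eq_right h']; simpa using sq_nonneg (s - x)
          · rw [max_eq_left (le_of_lt h')]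
        have hsx : (0:ℝ) < |s - x| := by
          rw [abs_pos]; exact sub_ne_zero_of_ne hs
        rw [Real.norm_eq_abs, abs_div]
        rw [div_le_iff₀ hsx]
        calc |(max (s - x) 0) ^ 2| = (max (s - x) 0) ^ 2 := abs_of_nonneg (by positivity)
          _ ≤ (s - x) ^ 2 := h1
          _ = |s - x| * |s - x| := by rw [← abs_mul, sq, abs_of_nonneg (mul_self_nonneg _)]
    have : Tendsto (fun s : ℝ => |s - x|) (𝓝[≠] x) (𝓝 0) := by
      have : Tendsto (fun s : ℝ => |s - x|) (𝓝 x) (𝓝 |x - x|) := by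
        exact ((continuous_id.sub continuous_const).abs).tendsto x
      simpa using this.mono_left nhdsWithin_le_nhds
    exact squeeze_zero_norm hb this
  · have heq : (fun s : ℝ => (max (s - t) 0) ^ 2) =ᶠ[𝓝 x] fun s => (s - t) ^ 2 := by
      filter_upwards [Ioi_mem_nhds h] with s hs
      rw [max_eq_left (by simp only [mem_Ioi] at hs; linarith)]
    rw [max_eq_left (by linarith)]
    have hd : HasDerivAt (fun s : ℝ => (s - t) ^ 2) (2 * (x - t)) x := by
      have := ((hasDerivAt_id' x).sub_const t).pow 2
      exact this.congr_deriv (by norm_num)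
    exact hd.congr_of_eventuallyEq heq

end GopAux

open GopAux

/-- `G[ψ, c]` is the maximal continuous function on `[0, ∞)` bounded above by
`ψ` whose C¹ supertangents `φ` at any `t > 0` satisfy `φ'(t) ≤ c(t)`. -/
theorem Gop_maximal (ψ c : ℝ → ℝ)
    (hψ : ContinuousOn ψ (Ici 0)) (hc : ContinuousOn c (Ici 0)) :
    -- `G[ψ, c]` is continuous on `[0, ∞)`
    ContinuousOn (Gop ψ c) (Ici 0) ∧
    -- `G[ψ, c] ≤ ψ`
    (∀ t : ℝ, 0 ≤ t → Gop ψ c t ≤ ψ t) ∧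
    -- supertangent property: `φ'(t) ≤ c(t)` for any C¹ supertangent `φ` at `t > 0`
    (∀ t : ℝ, 0 < t → ∀ φ : ℝ → ℝ, ContDiff ℝ 1 φ → φ t = Gop ψ c t →
      IsLocalMax (fun τ => Gop ψ c τ - φ τ) t → deriv φ t ≤ c t) ∧
    -- maximality
    (∀ f : ℝ → ℝ, ContinuousOn f (Ici 0) → (∀ t : ℝ, 0 ≤ t → f t ≤ ψ t) →
      (∀ t : ℝ, 0 < t → ∀ φ : ℝ → ℝ, ContDiff ℝ 1 φ → φ t = f t →
        IsLocalMax (fun τ => f τ - φ τ) t → deriv φ t ≤ c t) →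
      ∀ t : ℝ, 0 ≤ t → f t ≤ Gop ψ c t) := by
  -- continuous extensions of ψ and c to all of ℝ
  set ψ' : ℝ → ℝ := fun s => ψ (max s 0) with hψ'def
  set c' : ℝ → ℝ := fun s => c (max s 0) with hc'def
  have hψ'c : Continuous ψ' :=
    hψ.comp_continuous (continuous_id.max continuous_const) (fun x => le_max_right x 0)
  have hc'c : Continuous c' :=
    hc.comp_continuous (continuous_id.max continuous_const) (fun x => le_max_right x 0)
  have hψ'eq : ∀ {x : ℝ}, 0 ≤ x → ψ' x = ψ x := fun {x} hx => by
    rw [hψ'def]; simp [max_eq_left hx]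
  have hc'eq : ∀ {x : ℝ}, 0 ≤ x → c' x = c x := fun {x} hx => by
    rw [hc'def]; simp [max_eq_left hx]
  -- the primitive of c'
  set I : ℝ → ℝ := fun u => ∫ τ in (0 : ℝ)..u, c' τ with hIdef
  have hIderiv : ∀ u : ℝ, HasDerivAt I (c' u) u := fun u =>
    intervalIntegral.integral_hasDerivAt_right (hc'c.intervalIntegrable 0 u)
      (hc'c.stronglyMeasurableAtFilter _ _) hc'c.continuousAt
  have hIcont : Continuous I :=
    continuous_iff_continuousAt.mpr fun u => (hIderiv u).continuousAt
  -- congruence of the integrals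
  have hint : ∀ a b : ℝ, 0 ≤ a → 0 ≤ b →
      (∫ τ in a..b, c τ) = ∫ τ in a..b, c' τ := by
    intro a b ha hb
    apply intervalIntegral.integral_congr
    intro τ hτ
    have hτ0 : 0 ≤ τ := le_trans (le_min ha hb) hτ.1
    exact (hc'eq hτ0).symm
  -- the function whose running minimum appears in the decomposition
  set g : ℝ → ℝ := fun r => ψ' r - I r with hgdef
  have hgc : Continuous g := hψ'c.sub hIcont
  -- key decomposition
  have keyA : ∀ t : ℝ, 0 ≤ t → Gop ψ c t = rmin g t + I t := by
    intro t ht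
    have himg : (fun r => ψ r + ∫ τ in r..t, c τ) '' Icc 0 t
        = (fun x => x + I t) '' (g '' Icc 0 t) := by
      rw [← image_comp]
      apply image_congr
      intro r hr
      simp only [Function.comp_apply, hgdef]
      have h1 : (∫ τ in r..t, c τ) = ∫ τ in r..t, c' τ := hint r t hr.1 ht
      have h2 : (∫ τ in (0 : ℝ)..r, c' τ) + ∫ τ in r..t, c' τ = ∫ τ in (0 : ℝ)..t, c' τ :=
        intervalIntegral.integral_add_adjacent_intervals (hc'c.intervalIntegrable _ _)
          (hc'c.intervalIntegrable _ _)
      have h3 : ψ' r = ψ r := hψ'eq hr.1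
      rw [h1, h3, hIdef]
      dsimp only
      linarith
    rw [Gop, himg]
    rw [← Monotone.map_csInf_of_continuousAt (f := fun x => x + I t)
      (continuous_id.add continuous_const).continuousAt
      (fun a b hab => by dsimp; linarith)
      ((nonempty_Icc.mpr ht).image _) (bddBelow_image hgc t)]
    rfl
  refine ⟨?_, ?_, ?_, ?_⟩
  · -- continuity
    exact ((rmin_cont hgc).add hIcont.continuousOn).congr fun t ht => keyA t ht
  · -- Gop ≤ ψ
    intro t ht
    have h1 : rmin g t ≤ g t := rmin_le hgc ⟨ht, le_refl t⟩
    have h2 := hψ'eq ht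
    rw [keyA t ht]
    simp only [hgdef] at h1
    linarith
  · -- supertangent property
    intro t ht φ hφ hφt hmax
    have hd : HasDerivAt φ (deriv φ t) t :=
      ((hφ.differentiable one_ne_zero) t).hasDerivAt
    have hq : Tendsto (slope φ t) (𝓝[≠] t) (𝓝 (deriv φ t)) :=
      hasDerivAt_iff_tendsto_slope.mp hd
    have hp : Tendsto (slope I t) (𝓝[≠] t) (𝓝 (c t)) := by
      have := hasDerivAt_iff_tendsto_slope.mp (hIderiv t)
      rwa [hc'eq (le_of_lt ht)] at this
    have hsub : 𝓝[Iio t] t ≤ 𝓝[≠] t :=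
      nhdsWithin_mono t fun s hs => ne_of_lt hs
    refine le_of_tendsto_of_tendsto (hq.mono_left hsub) (hp.mono_left hsub) ?_
    have h0 : ∀ᶠ s in 𝓝[Iio t] t, Gop ψ c s ≤ φ s := by
      have h0' : ∀ᶠ s in 𝓝 t, Gop ψ c s - φ s ≤ Gop ψ c t - φ t := hmax
      filter_upwards [h0'.filter_mono nhdsWithin_le_nhds] with s hs
      rw [hφt] at hs
      linarith
    have h1 : ∀ᶠ s in 𝓝[Iio t] t, 0 < s :=
      (eventually_gt_nhds ht).filter_mono nhdsWithin_le_nhds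
    filter_upwards [h0, h1, self_mem_nhdsWithin] with s hGφ hs0 hst
    have hst' : s < t := hst
    rw [slope_def_field, slope_def_field]
    rw [div_le_div_right_of_neg (by linarith : s - t < 0)]
    have hGs : Gop ψ c s = rmin g s + I s := keyA s (le_of_lt hs0)
    have hGt : Gop ψ c t = rmin g t + I t := keyA t (le_of_lt ht)
    have hanti : rmin g t ≤ rmin g s := rmin_anti hgc (le_of_lt hs0) (le_of_lt hst')
    rw [hφt]
    linarith
  · -- maximality
    intro f hf hfψ hvisc t ht
    have visc : ∀ r : ℝ, 0 ≤ r → r ≤ t → f t ≤ f r + ∫ τ in r..t, c' τ := by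
      intro r hr hrt
      apply le_of_forall_pos_le_add
      intro ε hε
      set ε' : ℝ := ε / (t - r + 1) with hε'def
      have hε'pos : 0 < ε' := div_pos hε (by linarith)
      have main : f t - f r - (∫ τ in r..t, c' τ) - ε' * (t - r) ≤ 0 := by
        by_contra H
        push_neg at H
        set ρ : ℝ → ℝ := fun s => (max (s - t) 0) ^ 2 with hρdef
        have hρt : ρ t = 0 := by rw [hρdef]; norm_num
        have hρr : ρ r = 0 := by
          rw [hρdef]; dsimp only; rw [max_eq_right (by linarith)]; norm_num
        have hρT : ρ (t + 1) = 1 := by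
          rw [hρdef]; dsimp only; rw [max_eq_left (by linarith)]; norm_num
        set K : ℝ := max (f (t + 1) - f r - (∫ τ in r..(t + 1), c' τ) - ε' * (t + 1 - r)) 0
          with hKdef
        have hK0 : 0 ≤ K := le_max_right _ _
        set W : ℝ → ℝ := fun s =>
          f s - f r - (∫ τ in r..s, c' τ) - ε' * (s - r) - K * ρ s with hWdef
        have hrt1 : r ≤ t + 1 := by linarith
        have hintc : Continuous fun s : ℝ => ∫ τ in r..s, c' τ :=
          continuous_iff_continuousAt.mpr fun u =>
            (intervalIntegral.integral_hasDerivAt_right (hc'c.intervalIntegrable r u)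
              (hc'c.stronglyMeasurableAtFilter _ _) hc'c.continuousAt).continuousAt
        have hρc : Continuous ρ :=
          ((continuous_id.sub continuous_const).max continuous_const).pow 2
        have hWcont : ContinuousOn W (Icc r (t + 1)) := by
          apply ContinuousOn.sub
          apply ContinuousOn.sub
          apply ContinuousOn.sub
          apply ContinuousOn.sub
          · exact hf.mono fun x hx => le_trans hr hx.1
          · exact continuousOn_const
          · exact hintc.continuousOn
          · exact (continuous_const.mul (continuous_id.sub continuous_const)).continuousOn
          · exact (continuous_const.mul hρc).continuousOn
        obtain ⟨s₁, hs₁mem, hs₁max⟩ :=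
          isCompact_Icc.exists_isMaxOn (nonempty_Icc.mpr hrt1) hWcont
        have hWt : 0 < W t := by
          rw [hWdef]; dsimp only; rw [hρt]; linarith
        have hWr : W r = 0 := by
          rw [hWdef]; dsimp only; rw [hρr, intervalIntegral.integral_same]; ring
        have hWT : W (t + 1) ≤ 0 := by
          rw [hWdef]; dsimp only; rw [hρT]
          have : f (t + 1) - f r - (∫ τ in r..(t + 1), c' τ) - ε' * (t + 1 - r) ≤ K :=
            le_max_left _ _
          linarith
        have hs₁t : W t ≤ W s₁ := hs₁max ⟨hrt, by linarith⟩
        have hs₁r : r < s₁ := by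
          rcases lt_or_eq_of_le hs₁mem.1 with h | h
          · exact h
          · exfalso; rw [← h, hWr] at hs₁t; linarith
        have hs₁T : s₁ < t + 1 := by
          rcases lt_or_eq_of_le hs₁mem.2 with h | h
          · exact h
          · exfalso; rw [h] at hs₁t; linarith
        set φ : ℝ → ℝ := fun s =>
          f r + (∫ τ in r..s, c' τ) + ε' * (s - r) + K * ρ s + W s₁ with hφdef
        have hφderiv : ∀ s : ℝ, HasDerivAt φ (c' s + ε' + K * (2 * max (s - t) 0)) s := by
          intro s
          have h1 : HasDerivAt (fun u : ℝ => ∫ τ in r..u, c' τ) (c' s) s :=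
            intervalIntegral.integral_hasDerivAt_right (hc'c.intervalIntegrable r s)
              (hc'c.stronglyMeasurableAtFilter _ _) hc'c.continuousAt
          have h2 : HasDerivAt (fun u : ℝ => ε' * (u - r)) ε' s := by
            simpa using (((hasDerivAt_id s).sub_const r).const_mul ε')
          have h3 : HasDerivAt (fun u : ℝ => K * ρ u) (K * (2 * max (s - t) 0)) s :=
            (hasDerivAt_posPartSq t s).const_mul K
          have := ((((hasDerivAt_const s (f r)).add h1).add h2).add h3).add_const (W s₁)
          exact this.congr_deriv (by ring)
        have hφC1 : ContDiff ℝ 1 φ := by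
          rw [contDiff_one_iff_deriv]
          constructor
          · exact fun s => (hφderiv s).differentiableAt
          · have hde : deriv φ = fun s => c' s + ε' + K * (2 * max (s - t) 0) :=
              funext fun s => (hφderiv s).deriv
            rw [hde]
            exact (hc'c.add continuous_const).add (continuous_const.mul
              (continuous_const.mul ((continuous_id.sub continuous_const).max
                continuous_const)))
        have hφs₁ : φ s₁ = f s₁ := by
          have hWs₁ : W s₁ = f s₁ - f r - (∫ τ in r..s₁, c' τ) - ε' * (s₁ - r) - K * ρ s₁ :=
            rfl
          rw [hφdef]; dsimp only; linarith
        have hloc : IsLocalMax (fun τ => f τ - φ τ) s₁ := by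
          have hopen : Ioo r (t + 1) ∈ 𝓝 s₁ := isOpen_Ioo.mem_nhds ⟨hs₁r, hs₁T⟩
          filter_upwards [hopen] with s hs
          have hWs : W s ≤ W s₁ := hs₁max (Ioo_subset_Icc_self hs)
          have hWseq : W s = f s - f r - (∫ τ in r..s, c' τ) - ε' * (s - r) - K * ρ s := rfl
          have hWs₁eq : W s₁ = f s₁ - f r - (∫ τ in r..s₁, c' τ) - ε' * (s₁ - r) - K * ρ s₁ :=
            rfl
          rw [hφdef]; dsimp only; linarith
        have hfin := hvisc s₁ (lt_of_le_of_lt hr hs₁r) φ hφC1 hφs₁ hloc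
        rw [(hφderiv s₁).deriv] at hfin
        have hcc : c' s₁ = c s₁ := hc'eq (le_of_lt (lt_of_le_of_lt hr hs₁r))
        have hmax0 : 0 ≤ max (s₁ - t) 0 := le_max_right _ _
        nlinarith
      have hεb : ε' * (t - r) ≤ ε := by
        have hne : (t - r + 1) ≠ 0 := ne_of_gt (by linarith)
        have h1 : ε' * (t - r + 1) = ε := by
          rw [hε'def]; exact div_mul_cancel₀ ε hne
        nlinarith
      linarith
    have S_ne : ((fun r => ψ r + ∫ τ in r..t, c τ) '' Icc 0 t).Nonempty :=
      (nonempty_Icc.mpr ht).image _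
    refine le_csInf S_ne ?_
    rintro b ⟨r, hr, rfl⟩
    show f t ≤ ψ r + ∫ τ in r..t, c τ
    have h1 := visc r hr.1 hr.2
    have h2 : (∫ τ in r..t, c τ) = ∫ τ in r..t, c' τ := hint r t hr.1 ht
    have h3 := hfψ r hr.1
    linarith
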